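/- Let r < 0 be a real number, set T_max = (1/2)·ln((1 + r²)/r²), and let 0 < T < T_max. Define P(t) = √(e^{−2(T−t)}(1 + r²) − r²) − r for t ∈ [0, T]. Then P(T) = 1 − r, P(t) + r > 0 for every t ∈ [0, T], and P is differentiable on [0, T] with Ṗ(t) − 2r − P(t)²/(P(t) + r) = 0 for every t ∈ [0, T]. -/

import Mathlib

/-- Example 1 of the paper: for `r < 0` and horizon `0 < T < T_max`, the function
`P(t) = √(e^{−2(T−t)}(1 + r²) − r²) − r` satisfies `P(T) = 1 − r`, `P(t) + r > 0`
on `[0, T]`, and solves the scalar Riccati equation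
`Ṗ(t) − 2r − P(t)²/(P(t) + r) = 0` on `[0, T]`. -/
theorem scalar_riccati_explicit_solution
    (r : ℝ) (hr : r < 0)
    (Tmax : ℝ) (hTmax : Tmax = (1 / 2) * Real.log ((1 + r ^ 2) / r ^ 2))
    (T : ℝ) (hT0 : 0 < T) (hTmax' : T < Tmax)
    (P : ℝ → ℝ)
    (hP : ∀ t : ℝ,
      P t = Real.sqrt (Real.exp (-2 * (T - t)) * (1 + r ^ 2) - r ^ 2) - r) :
    P T = 1 - r ∧
      ∀ t ∈ Set.Icc (0 : ℝ) T,
        0 < P t + r ∧ HasDerivAt P (2 * r + P t ^ 2 / (P t + r)) t := by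
  have hr2 : (0:ℝ) < r ^ 2 := pow_pos (neg_pos.2 hr) 2 |>.trans_le (by nlinarith)
  have hr2' : (0:ℝ) < 1 + r ^ 2 := by positivity
  constructor
  · rw [hP T]
    have h1 : Real.exp (-2 * (T - T)) * (1 + r ^ 2) - r ^ 2 = 1 := by
      rw [sub_self, mul_zero, Real.exp_zero]; ring
    rw [h1, Real.sqrt_one]
  · intro t ht
    obtain ⟨ht0, htT⟩ := ht
    have hgt : 0 < Real.exp (-2 * (T - t)) * (1 + r ^ 2) - r ^ 2 := by
      have h1 : Real.exp (-2 * T) ≤ Real.exp (-2 * (T - t)) :=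
        Real.exp_le_exp.2 (by linarith)
      have h2 : r ^ 2 / (1 + r ^ 2) < Real.exp (-2 * T) := by
        rw [← Real.exp_log (show (0:ℝ) < r ^ 2 / (1 + r ^ 2) by positivity)]
        apply Real.exp_lt_exp.2
        have hlog : Real.log (r ^ 2 / (1 + r ^ 2)) = - Real.log ((1 + r ^ 2) / r ^ 2) := by
          rw [← Real.log_inv]
          congr 1
          field_simp
        rw [hlog]
        have : Real.log ((1 + r ^ 2) / r ^ 2) = 2 * Tmax := by rw [hTmax]; ring
        rw [this]; linarith
      have h3 : r ^ 2 < Real.exp (-2 * T) * (1 + r ^ 2) := by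
        rw [div_lt_iff₀ hr2'] at h2
        linarith
      nlinarith
    set s := Real.sqrt (Real.exp (-2 * (T - t)) * (1 + r ^ 2) - r ^ 2) with hs
    have hspos : 0 < s := Real.sqrt_pos.2 hgt
    have hssq : s ^ 2 = Real.exp (-2 * (T - t)) * (1 + r ^ 2) - r ^ 2 := by
      rw [hs, Real.sq_sqrt hgt.le]
    have hPt : P t = s - r := hP t
    have hPr : P t + r = s := by rw [hPt]; ring
    refine ⟨by rw [hPr]; exact hspos, ?_⟩
    have hPfun : P = fun u => Real.sqrt (Real.exp (-2 * (T - u)) * (1 + r ^ 2) - r ^ 2) - r :=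
      funext fun u => hP u
    rw [hPfun]
    have hinner : HasDerivAt (fun u : ℝ => -2 * (T - u)) 2 t := by
      have := ((hasDerivAt_id t).const_sub T).const_mul (-2 : ℝ)
      simpa using this
    have hg : HasDerivAt (fun u : ℝ => Real.exp (-2 * (T - u)) * (1 + r ^ 2) - r ^ 2)
        (Real.exp (-2 * (T - t)) * 2 * (1 + r ^ 2)) t :=
      ((hinner.exp).mul_const (1 + r ^ 2)).sub_const (r ^ 2)
    have hsqrt := (hg.sqrt (ne_of_gt hgt)).sub_const r
    convert hsqrt using 1
    case e'_4 => rfl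
    case e'_5 => rfl
    simp only [← hP]
    rw [hPr, hPt, ← hs]
    have hE : Real.exp (-2 * (T - t)) * (1 + r ^ 2) = s ^ 2 + r ^ 2 := by linarith
    have hE' : Real.exp (-(2 * (T - t))) * (1 + r ^ 2) = s ^ 2 + r ^ 2 := by
      rw [show -(2 * (T - t)) = -2 * (T - t) by ring]; exact hE
    field_simp
    nlinarith [hE', hspos]
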